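/- Let d ≥ 2, let 𝒴 be a finite set, and let W : Fin d → 𝒴 → ℝ assign to each input x a probability vector W(·|x) on 𝒴, with W(y|x) > 0 for every x, y. Let χ_* = max_{a≠b} ∑_y (W(y|b) − W(y|a))²/W(y|a) and assume χ_* > 0. Fix n ≥ 1, 0 < ρ < 1/(d−1), set θ = (1−(d−1)ρ, ρ, …, ρ) ∈ ℝ^d and q(y) = ∑_x θ_x W(y|x), and let T be the subspace {u ∈ ℝ^d : ∑_x u_x = 0} with orthogonal projection P_T = I − (1/d)𝟙𝟙ᵀ. Define the Fisher matrix I_θ = n · P_T · W · diag(q)^{-1} · Wᵀ · P_T (viewing W as the d × |𝒴| matrix (W(y|x))), and assume I_θ is positive definite as a quadratic form on T. Then the trace on T of the inverse of the restriction of I_θ to T satisfies tr_T(I_θ^{-1}) ≥ (d−1)(1−(d−1)ρ)/(n·χ_*). -/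

import Mathlib

open Finset BigOperators Matrix

/-- **Near-vertex Cramér–Rao trace bound** (quantitative core of Theorem 8.1).
At the near-vertex point `θ = (1−(d−1)ρ, ρ, …, ρ)`, with mixture `q = ∑ₓ θₓ W(·|x)`,
tangent projection `P_T = I − (1/d)𝟙𝟙ᵀ`, and Fisher matrix
`I_θ = n·P_T·W·diag(q)⁻¹·Wᵀ·P_T` assumed positive definite on the sum-zero subspace `T`,
the trace on `T` of the inverse of the restriction of `I_θ` to `T` (realised as the trace of
any matrix `B` with `B I_θ = I_θ B = P_T` and `P_T B = B P_T = B`) is at least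
`(d−1)(1−(d−1)ρ)/(n χ_*)`, where `χ_*` is the worst-case pairwise chi-square divergence. -/
theorem near_vertex_cramer_rao (d : ℕ) (hd : 2 ≤ d)
    (Y : Type) [Fintype Y] [DecidableEq Y]
    (W : Fin d → Y → ℝ) (hpos : ∀ x y, 0 < W x y) (hrow : ∀ x, ∑ y, W x y = 1)
    (chiStar : ℝ) (hchipos : 0 < chiStar)
    (hub : ∀ a b : Fin d, a ≠ b → ∑ y, (W b y - W a y) ^ 2 / W a y ≤ chiStar)
    (hat : ∃ a b : Fin d, a ≠ b ∧ ∑ y, (W b y - W a y) ^ 2 / W a y = chiStar)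
    (n : ℕ) (hn : 1 ≤ n)
    (ρ : ℝ) (hρ0 : 0 < ρ) (hρ1 : ρ < 1 / ((d : ℝ) - 1))
    (θ : Fin d → ℝ) (hθ : θ = fun x => if x = (⟨0, by omega⟩ : Fin d) then 1 - ((d : ℝ) - 1) * ρ else ρ)
    (q : Y → ℝ) (hq : q = fun y => ∑ x, θ x * W x y)
    (PT : Matrix (Fin d) (Fin d) ℝ)
    (hPT : PT = 1 - (d : ℝ)⁻¹ • (Matrix.of fun _ _ => (1 : ℝ)))
    (Iθ : Matrix (Fin d) (Fin d) ℝ)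
    (hIθ : Iθ = (n : ℝ) • (PT * Matrix.of (fun x x' => ∑ y, W x y * W x' y / q y) * PT))
    (hpd : ∀ u : Fin d → ℝ, (∑ x, u x = 0) → u ≠ 0 → 0 < u ⬝ᵥ Iθ.mulVec u)
    (B : Matrix (Fin d) (Fin d) ℝ)
    (hB1 : B * Iθ = PT) (hB2 : Iθ * B = PT) (hB3 : PT * B = B) (hB4 : B * PT = B) :
    ((d : ℝ) - 1) * (1 - ((d : ℝ) - 1) * ρ) / (n * chiStar) ≤ Matrix.trace B := by
  have hx0 : (0:ℕ) < d := by omega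
  set x0 : Fin d := ⟨0, hx0⟩ with hx0def
  have hd2 : (2:ℝ) ≤ (d:ℝ) := by exact_mod_cast hd
  have hdpos : (0:ℝ) < (d:ℝ) := by linarith
  have hdne : ((d:ℝ)) ≠ 0 := ne_of_gt hdpos
  have hd1 : (1:ℝ) ≤ (d:ℝ) - 1 := by linarith
  have hθ0 : 0 < 1 - ((d : ℝ) - 1) * ρ := by
    have h := (lt_div_iff₀ (by linarith : (0:ℝ) < (d:ℝ) - 1)).mp hρ1
    nlinarith
  set θ0 : ℝ := 1 - ((d : ℝ) - 1) * ρ with hθ0def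
  set M : Matrix (Fin d) (Fin d) ℝ := Matrix.of (fun x x' => ∑ y, W x y * W x' y / q y) with hM
  -- θ positivity
  have hθpos : ∀ x, 0 < θ x := by
    intro x; rw [hθ]; dsimp only; split
    · exact hθ0
    · exact hρ0
  have hq_ge : ∀ y, θ0 * W x0 y ≤ q y := by
    intro y; rw [hq]
    have : θ0 * W x0 y = θ x0 * W x0 y := by rw [hθ]; simp
    rw [this]
    exact Finset.single_le_sum (fun x _ => le_of_lt (mul_pos (hθpos x) (hpos x y))) (Finset.mem_univ x0)
  have hq_pos : ∀ y, 0 < q y := fun y =>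
    lt_of_lt_of_le (mul_pos hθ0 (hpos x0 y)) (hq_ge y)
  -- PT action
  have hPTmv : ∀ z : Fin d → ℝ, PT *ᵥ z = fun x => z x - (d:ℝ)⁻¹ * ∑ x', z x' := by
    intro z; funext x
    rw [hPT, Matrix.sub_mulVec, Matrix.smul_mulVec, Matrix.one_mulVec]
    simp [Matrix.mulVec, dotProduct]
  have hPTsum : ∀ z : Fin d → ℝ, ∑ x, (PT *ᵥ z) x = 0 := by
    intro z; rw [hPTmv]
    simp only
    rw [Finset.sum_sub_distrib, Finset.sum_const, Finset.card_univ, Fintype.card_fin]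
    rw [nsmul_eq_mul]
    field_simp
    norm_num
  have hPTfix : ∀ z : Fin d → ℝ, (∑ x, z x = 0) → PT *ᵥ z = z := by
    intro z hz; rw [hPTmv]; funext x; simp [hz]
  -- symmetry
  have hPTt : PTᵀ = PT := by
    rw [hPT]; ext i j; simp [Matrix.transpose_apply, Matrix.one_apply, eq_comm]
  have hMt : Mᵀ = M := by
    rw [hM]; ext i j
    simp only [Matrix.transpose_apply, Matrix.of_apply]
    exact Finset.sum_congr rfl fun y _ => by ring
  have hIt : Iθᵀ = Iθ := by
    rw [hIθ, Matrix.transpose_smul, Matrix.transpose_mul, Matrix.transpose_mul, hPTt, hMt]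
    rw [Matrix.mul_assoc]
  have hsymm : ∀ a b : Fin d → ℝ, a ⬝ᵥ Iθ *ᵥ b = b ⬝ᵥ Iθ *ᵥ a := by
    intro a b
    rw [Matrix.dotProduct_mulVec, ← Matrix.mulVec_transpose, hIt, dotProduct_comm]
  -- quadratic form of M
  have hMform : ∀ u : Fin d → ℝ, u ⬝ᵥ M *ᵥ u = ∑ y, (∑ x, u x * W x y)^2 / q y := by
    intro u
    have key : ∀ y, (∑ x, u x * W x y)^2 / q y
        = ∑ x, ∑ x', u x * (W x y * W x' y / q y) * u x' := by
      intro y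
      rw [sq, Finset.sum_mul_sum, Finset.sum_div]
      refine Finset.sum_congr rfl fun x _ => ?_
      rw [Finset.sum_div]
      exact Finset.sum_congr rfl fun x' _ => by ring
    have L : u ⬝ᵥ M *ᵥ u = ∑ x, ∑ x', ∑ y, u x * (W x y * W x' y / q y) * u x' := by
      simp only [dotProduct, Matrix.mulVec, hM, Matrix.of_apply]
      refine Finset.sum_congr rfl fun x _ => ?_
      rw [Finset.mul_sum]
      refine Finset.sum_congr rfl fun x' _ => ?_
      rw [Finset.sum_mul, Finset.mul_sum]
      exact Finset.sum_congr rfl fun y _ => by ring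
    rw [L]
    have L2 : ∑ x, ∑ x', ∑ y, u x * (W x y * W x' y / q y) * u x'
        = ∑ y, ∑ x, ∑ x', u x * (W x y * W x' y / q y) * u x' := by
      calc ∑ x, ∑ x', ∑ y, u x * (W x y * W x' y / q y) * u x'
          = ∑ x, ∑ y, ∑ x', u x * (W x y * W x' y / q y) * u x' :=
            Finset.sum_congr rfl fun x _ => Finset.sum_comm
        _ = ∑ y, ∑ x, ∑ x', u x * (W x y * W x' y / q y) * u x' := Finset.sum_comm
    rw [L2]
    exact Finset.sum_congr rfl fun y _ => (key y).symm
  have hform : ∀ u : Fin d → ℝ, (∑ x, u x = 0) →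
      u ⬝ᵥ Iθ *ᵥ u = (n:ℝ) * ∑ y, (∑ x, u x * W x y)^2 / q y := by
    intro u hu
    rw [hIθ, Matrix.smul_mulVec, dotProduct_smul, smul_eq_mul]
    congr 1
    rw [← Matrix.mulVec_mulVec, ← Matrix.mulVec_mulVec, hPTfix u hu,
      Matrix.dotProduct_mulVec (w := M *ᵥ u), ← Matrix.mulVec_transpose, hPTt, hPTfix u hu]
    exact hMform u
  -- the tangent vectors
  set v : Fin d → Fin d → ℝ := fun j x => (if x = j then 1 else 0) - (d:ℝ)⁻¹ with hv
  have hvsum : ∀ j, ∑ x, v j x = 0 := by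
    intro j
    simp only [hv, Finset.sum_sub_distrib, Finset.sum_ite_eq', Finset.mem_univ, if_true,
      Finset.sum_const, Finset.card_univ, Fintype.card_fin, nsmul_eq_mul]
    field_simp
    norm_num
  have hvne : ∀ j, v j ≠ 0 := by
    intro j h
    have := congrFun h j
    simp only [hv, if_pos rfl, Pi.zero_apply, if_true] at this
    have hinv : (d:ℝ)⁻¹ = 1 := by linarith
    rw [inv_eq_one] at hinv
    linarith
  have hvnorm : ∀ j, v j ⬝ᵥ v j = 1 - (d:ℝ)⁻¹ := by
    intro j
    simp only [dotProduct, hv]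
    have key : ∀ x : Fin d,
        ((if x = j then (1:ℝ) else 0) - (d:ℝ)⁻¹) * ((if x = j then (1:ℝ) else 0) - (d:ℝ)⁻¹)
        = (if x = j then (1:ℝ) - 2*(d:ℝ)⁻¹ else 0) + (d:ℝ)⁻¹^2 := by
      intro x; split <;> ring
    rw [Finset.sum_congr rfl fun x _ => key x, Finset.sum_add_distrib,
      Finset.sum_ite_eq' Finset.univ j, Finset.sum_const, Finset.card_univ, Fintype.card_fin]
    simp only [Finset.mem_univ, if_true, nsmul_eq_mul]
    field_simp
    ring
  set Q : Fin d → ℝ := fun j => v j ⬝ᵥ Iθ *ᵥ v j with hQ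
  have hQpos : ∀ j, 0 < Q j := fun j => hpd (v j) (hvsum j) (hvne j)
  -- Cauchy-Schwarz per j
  have hCS : ∀ j, (1 - (d:ℝ)⁻¹)^2 / Q j ≤ v j ⬝ᵥ B *ᵥ v j := by
    intro j
    set u : Fin d → ℝ := v j with hu
    set w : Fin d → ℝ := B *ᵥ u with hw
    have hIw : Iθ *ᵥ w = u := by
      rw [hw, Matrix.mulVec_mulVec, hB2]
      exact hPTfix u (hvsum j)
    have hwsum : ∑ x, w x = 0 := by
      have h : w = PT *ᵥ (B *ᵥ u) := by rw [hw, Matrix.mulVec_mulVec, hB3]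
      rw [h]; exact hPTsum _
    have hwne : w ≠ 0 := by
      intro h
      exact hvne j (show u = 0 by rw [← hIw, h, Matrix.mulVec_zero])
    set β : ℝ := u ⬝ᵥ w with hβdef
    have hβ : 0 < β := by
      have h1 : β = w ⬝ᵥ Iθ *ᵥ w := by rw [hβdef, hIw, dotProduct_comm]
      rw [h1]; exact hpd w hwsum hwne
    set a : ℝ := 1 - (d:ℝ)⁻¹ with hadef
    have ha : u ⬝ᵥ u = a := hvnorm j
    set t : ℝ := a / β with htdef
    have h1 : u ⬝ᵥ Iθ *ᵥ w = a := by rw [hIw]; exact ha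
    have h2 : w ⬝ᵥ Iθ *ᵥ u = a := by rw [hsymm]; exact h1
    have h3 : w ⬝ᵥ Iθ *ᵥ w = β := by rw [hIw, dotProduct_comm]
    have hQj : u ⬝ᵥ Iθ *ᵥ u = Q j := rfl
    have hexp : (u - t • w) ⬝ᵥ Iθ *ᵥ (u - t • w) = Q j - 2*t*a + t^2*β := by
      simp only [Matrix.mulVec_sub, Matrix.mulVec_smul, sub_dotProduct,
        dotProduct_sub, dotProduct_smul, smul_dotProduct,
        smul_eq_mul, h1, h2, h3, hQj]
      ring
    have h0 : 0 ≤ (u - t • w) ⬝ᵥ Iθ *ᵥ (u - t • w) := by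
      by_cases hz : u - t • w = 0
      · rw [hz]; simp
      · refine le_of_lt (hpd _ ?_ hz)
        have : ∑ x, (u x - t * w x) = 0 := by
          rw [Finset.sum_sub_distrib, ← Finset.mul_sum, hvsum j, hwsum, mul_zero, sub_zero]
        simpa using this
    rw [hexp] at h0
    have hβne : β ≠ 0 := ne_of_gt hβ
    have heq : Q j - 2*t*a + t^2*β = Q j - a^2/β := by
      rw [htdef]; field_simp; ring
    rw [heq] at h0
    have hkey : a^2/β ≤ Q j := by linarith
    have : a^2 ≤ Q j * β := by
      calc a^2 = a^2/β * β := by field_simp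
        _ ≤ Q j * β := mul_le_mul_of_nonneg_right hkey (le_of_lt hβ)
    rw [div_le_iff₀ (hQpos j)]
    calc a^2 ≤ Q j * β := this
      _ = β * Q j := mul_comm _ _
  -- trace identity
  have hPTentry : ∀ i k : Fin d, PT i k = v i k := by
    intro i k
    rw [hPT, hv]
    simp only [Matrix.sub_apply, Matrix.smul_apply, Matrix.of_apply, Matrix.one_apply,
      smul_eq_mul, mul_one]
    by_cases h : i = k
    · subst h; simp
    · simp [h, Ne.symm h]
  have htrace : Matrix.trace B = ∑ j, v j ⬝ᵥ B *ᵥ v j := by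
    have hB' : PT * B * PT = B := by rw [Matrix.mul_assoc, hB4, hB3]
    have hdiag : ∀ j, B j j = v j ⬝ᵥ B *ᵥ v j := by
      intro j
      have key : (PT * B * PT) j j = v j ⬝ᵥ B *ᵥ v j := by
        simp only [Matrix.mul_apply, dotProduct, Matrix.mulVec]
        calc ∑ b, (∑ a, PT j a * B a b) * PT b j
            = ∑ b, ∑ a, v j a * B a b * v j b := by
              refine Finset.sum_congr rfl fun b _ => ?_
              rw [Finset.sum_mul]
              refine Finset.sum_congr rfl fun x _ => ?_
              rw [hPTentry j x, hPTentry b j]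
              have h2 : v b j = v j b := by rw [hv]; simp [eq_comm]
              rw [h2]
          _ = ∑ a, v j a * ∑ b, B a b * v j b := by
              rw [Finset.sum_comm]
              refine Finset.sum_congr rfl fun a _ => ?_
              rw [Finset.mul_sum]
              exact Finset.sum_congr rfl fun b _ => by ring
      rw [← key, hB']
    rw [Matrix.trace]
    exact Finset.sum_congr rfl fun j _ => hdiag j
  -- sum of Q bound
  have hg : ∀ (j : Fin d) (y : Y), ∑ x, v j x * W x y = W j y - (d:ℝ)⁻¹ * ∑ x, W x y := by
    intro j y
    have : ∀ x : Fin d, v j x * W x y = (if x = j then W x y else 0) - (d:ℝ)⁻¹ * W x y := by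
      intro x; rw [hv]; dsimp only; split <;> ring
    rw [Finset.sum_congr rfl fun x _ => this x, Finset.sum_sub_distrib,
      Finset.sum_ite_eq' Finset.univ j, ← Finset.mul_sum]
    simp
  have hvar : ∀ y : Y, ∑ j, (W j y - (d:ℝ)⁻¹ * ∑ x, W x y)^2 ≤ ∑ j, (W j y - W x0 y)^2 := by
    intro y
    obtain ⟨s, hs⟩ : ∃ s : ℝ, s = ∑ x, W x y := ⟨_, rfl⟩
    obtain ⟨m, hm⟩ : ∃ m : ℝ, m = (d:ℝ)⁻¹ * s := ⟨_, rfl⟩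
    have hds : (d:ℝ) * m = s := by rw [hm]; field_simp
    rw [← hs, ← hm]
    set a0 : ℝ := W x0 y with ha0
    have hident : ∑ j, ((W j y - a0)^2 - (W j y - m)^2) = (d:ℝ)*(m - a0)^2 := by
      have hterm : ∀ j : Fin d, (W j y - a0)^2 - (W j y - m)^2
          = (m - a0)*(2*W j y) - (m - a0)*(a0 + m) := fun j => by ring
      rw [Finset.sum_congr rfl fun j _ => hterm j, Finset.sum_sub_distrib, ← Finset.mul_sum,
        Finset.sum_const, Finset.card_univ, Fintype.card_fin, nsmul_eq_mul]
      have h2s : ∑ j : Fin d, 2 * W j y = 2 * s := by rw [← Finset.mul_sum, ← hs]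
      rw [h2s, ← hds]
      ring
    rw [Finset.sum_sub_distrib] at hident
    nlinarith [sq_nonneg (m - a0), hdpos]
  have hchi : ∑ j, ∑ y, (W j y - W x0 y)^2 / W x0 y ≤ ((d:ℝ) - 1) * chiStar := by
    rw [← Finset.sum_erase_add _ _ (Finset.mem_univ x0)]
    have h1 : ∑ y, (W x0 y - W x0 y)^2 / W x0 y = 0 := by simp
    rw [h1, add_zero]
    calc ∑ j ∈ Finset.univ.erase x0, ∑ y, (W j y - W x0 y)^2 / W x0 y
        ≤ ∑ _j ∈ Finset.univ.erase x0, chiStar :=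
          Finset.sum_le_sum fun j hj => hub x0 j (Finset.mem_erase.mp hj).1.symm
      _ = ((Finset.univ.erase x0).card : ℝ) * chiStar := by
          rw [Finset.sum_const, nsmul_eq_mul]
      _ = ((d:ℝ) - 1) * chiStar := by
          rw [Finset.card_erase_of_mem (Finset.mem_univ x0), Finset.card_univ, Fintype.card_fin,
            Nat.cast_sub (by omega : 1 ≤ d), Nat.cast_one]
  have hQsum : ∑ j, Q j ≤ (n:ℝ) * (((d:ℝ) - 1) * chiStar / θ0) := by
    have hQj : ∀ j, Q j = (n:ℝ) * ∑ y, (W j y - (d:ℝ)⁻¹ * ∑ x, W x y)^2 / q y := by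
      intro j
      rw [hQ]
      dsimp only
      rw [hform (v j) (hvsum j)]
      congr 1
      exact Finset.sum_congr rfl fun y _ => by rw [hg j y]
    have step1 : ∀ j, ∑ y, (W j y - (d:ℝ)⁻¹ * ∑ x, W x y)^2 / q y
        ≤ θ0⁻¹ * ∑ y, (W j y - (d:ℝ)⁻¹ * ∑ x, W x y)^2 / W x0 y := by
      intro j
      rw [Finset.mul_sum]
      refine Finset.sum_le_sum fun y _ => ?_
      have h1 : (W j y - (d:ℝ)⁻¹ * ∑ x, W x y)^2 / q y
          ≤ (W j y - (d:ℝ)⁻¹ * ∑ x, W x y)^2 / (θ0 * W x0 y) :=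
        div_le_div_of_nonneg_left (sq_nonneg _) (mul_pos hθ0 (hpos x0 y)) (hq_ge y)
      have h2 : (W j y - (d:ℝ)⁻¹ * ∑ x, W x y)^2 / (θ0 * W x0 y)
          = θ0⁻¹ * ((W j y - (d:ℝ)⁻¹ * ∑ x, W x y)^2 / W x0 y) := by
        rw [div_mul_eq_div_div_swap, div_eq_inv_mul]
      linarith [h1, h2.le, h2.ge]
    have step2 : ∑ j, ∑ y, (W j y - (d:ℝ)⁻¹ * ∑ x, W x y)^2 / W x0 y
        ≤ ((d:ℝ) - 1) * chiStar := by
      have swap : ∑ j, ∑ y, (W j y - (d:ℝ)⁻¹ * ∑ x, W x y)^2 / W x0 y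
          = ∑ y, (∑ j, (W j y - (d:ℝ)⁻¹ * ∑ x, W x y)^2) / W x0 y := by
        rw [Finset.sum_comm]
        exact Finset.sum_congr rfl fun y _ => (Finset.sum_div _ _ _).symm
      have swap2 : ∑ j, ∑ y, (W j y - W x0 y)^2 / W x0 y
          = ∑ y, (∑ j, (W j y - W x0 y)^2) / W x0 y := by
        rw [Finset.sum_comm]
        exact Finset.sum_congr rfl fun y _ => (Finset.sum_div _ _ _).symm
      rw [swap]
      calc ∑ y, (∑ j, (W j y - (d:ℝ)⁻¹ * ∑ x, W x y)^2) / W x0 y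
          ≤ ∑ y, (∑ j, (W j y - W x0 y)^2) / W x0 y :=
            Finset.sum_le_sum fun y _ =>
              div_le_div_of_nonneg_right (hvar y) (hpos x0 y).le
        _ = ∑ j, ∑ y, (W j y - W x0 y)^2 / W x0 y := swap2.symm
        _ ≤ ((d:ℝ) - 1) * chiStar := hchi
    calc ∑ j, Q j = (n:ℝ) * ∑ j, ∑ y, (W j y - (d:ℝ)⁻¹ * ∑ x, W x y)^2 / q y := by
          rw [Finset.mul_sum]; exact Finset.sum_congr rfl fun j _ => hQj j
      _ ≤ (n:ℝ) * (θ0⁻¹ * (((d:ℝ) - 1) * chiStar)) := by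
          have hn0 : (0:ℝ) ≤ (n:ℝ) := Nat.cast_nonneg n
          refine mul_le_mul_of_nonneg_left ?_ hn0
          calc ∑ j, ∑ y, (W j y - (d:ℝ)⁻¹ * ∑ x, W x y)^2 / q y
              ≤ ∑ j, θ0⁻¹ * ∑ y, (W j y - (d:ℝ)⁻¹ * ∑ x, W x y)^2 / W x0 y :=
                Finset.sum_le_sum fun j _ => step1 j
            _ = θ0⁻¹ * ∑ j, ∑ y, (W j y - (d:ℝ)⁻¹ * ∑ x, W x y)^2 / W x0 y := by
                rw [Finset.mul_sum]
            _ ≤ θ0⁻¹ * (((d:ℝ) - 1) * chiStar) :=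
                mul_le_mul_of_nonneg_left step2 (inv_nonneg.mpr hθ0.le)
      _ = (n:ℝ) * (((d:ℝ) - 1) * chiStar / θ0) := by
          rw [div_eq_inv_mul]
  -- combine
  have hA : 0 < ∑ j, Q j := Finset.sum_pos (fun j _ => hQpos j) ⟨x0, Finset.mem_univ x0⟩
  set a : ℝ := 1 - (d:ℝ)⁻¹ with hadef
  have hda : (d:ℝ) * a = (d:ℝ) - 1 := by rw [hadef]; field_simp
  have hCS2 : ((d:ℝ) - 1)^2 ≤ (∑ j, Q j) * (∑ j, a^2 / Q j) := by
    have h := Finset.sum_mul_sq_le_sq_mul_sq Finset.univ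
      (fun j => Real.sqrt (Q j)) (fun j => a / Real.sqrt (Q j))
    have h1 : ∀ j : Fin d, Real.sqrt (Q j) * (a / Real.sqrt (Q j)) = a := by
      intro j
      have hs := Real.sqrt_pos.mpr (hQpos j)
      field_simp
    have h2 : ∀ j : Fin d, Real.sqrt (Q j)^2 = Q j := fun j => Real.sq_sqrt (hQpos j).le
    have h3 : ∀ j : Fin d, (a / Real.sqrt (Q j))^2 = a^2 / Q j := by
      intro j; rw [div_pow, h2]
    rw [Finset.sum_congr rfl fun j _ => h1 j, Finset.sum_congr rfl fun j _ => h2 j,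
      Finset.sum_congr rfl fun j _ => h3 j, Finset.sum_const, Finset.card_univ,
      Fintype.card_fin, nsmul_eq_mul, hda] at h
    exact h
  have htr : ((d:ℝ)-1)^2 / (∑ j, Q j) ≤ Matrix.trace B := by
    rw [htrace]
    have hstep : ((d:ℝ)-1)^2 / (∑ j, Q j) ≤ ∑ j, a^2 / Q j := by
      rw [div_le_iff₀ hA]
      calc ((d:ℝ)-1)^2 ≤ (∑ j, Q j) * (∑ j, a^2/Q j) := hCS2
        _ = (∑ j, a^2/Q j) * (∑ j, Q j) := mul_comm _ _
    calc ((d:ℝ)-1)^2 / (∑ j, Q j) ≤ ∑ j, a^2 / Q j := hstep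
      _ ≤ ∑ j, v j ⬝ᵥ B *ᵥ v j := Finset.sum_le_sum fun j _ => hCS j
  have hnR : (0:ℝ) < (n:ℝ) := by exact_mod_cast Nat.pos_of_ne_zero (by omega)
  have hmid : ((d:ℝ)-1)^2 / ((n:ℝ) * (((d:ℝ)-1)*chiStar/θ0)) ≤ ((d:ℝ)-1)^2 / (∑ j, Q j) :=
    div_le_div_of_nonneg_left (sq_nonneg _) hA hQsum
  have heq : ((d:ℝ)-1) * θ0 / ((n:ℝ)*chiStar) = ((d:ℝ)-1)^2 / ((n:ℝ)*(((d:ℝ)-1)*chiStar/θ0)) := by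
    have hne1 : ((d:ℝ)-1) ≠ 0 := by linarith
    have hnn : (n:ℝ) ≠ 0 := ne_of_gt hnR
    have hθ0ne : θ0 ≠ 0 := ne_of_gt hθ0
    have hχne : chiStar ≠ 0 := ne_of_gt hchipos
    field_simp
  rw [heq]
  exact le_trans hmid htr
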